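/- arXiv:1709.07929 — 5 statements merged into one kernel-verified Lean document; each statement's English description precedes it below -/
import Mathlib

section
/- Let (X, σ) be a support data for a triangulated category T such that X is a noetherian sober space and the maps f_σ and g_σ are mutually inverse bijections between thick subcategories of T and specialization-closed subsets of X. Then for any closed subset Z of X, there exists an object M of T with σ(M) = Z. -/
universe v u

open CategoryTheory Limits Pretriangulated

variable (C : Type u) [Category.{v} C] [Preadditive C] [HasZeroObject C]
  [HasBinaryBiproducts C] [HasShift C ℤ]
  [∀ n : ℤ, (CategoryTheory.shiftFunctor C n).Additive] [Pretriangulated C]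

/-- A thick subcategory of a triangulated category: a nonempty (contains the zero
objects) full additive subcategory, closed under isomorphisms, shifts, extensions
and direct summands, recorded via its set of objects. -/
structure ThickSubcat where
  set : Set C
  zero_mem : ∀ M : C, IsZero M → M ∈ set
  iso_mem : ∀ {M N : C}, (M ≅ N) → M ∈ set → N ∈ set
  shift_mem : ∀ (M : C) (n : ℤ), M ∈ set → (shiftFunctor C n).obj M ∈ set
  ext_mem : ∀ T : Triangle C, (T ∈ distTriang C) → T.obj₁ ∈ set → T.obj₃ ∈ set →
    T.obj₂ ∈ set
  summand_mem : ∀ M N : C, (M ⊞ N) ∈ set → M ∈ set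

/-- A support data `(X, σ)` for a triangulated category `C`: `σ` assigns to each
object a closed subset of `X` such that `σ(0) = ∅`, `σ(ΣⁿM) = σ(M)`,
`σ(M ⊕ N) = σ(M) ∪ σ(N)`, and `σ(M) ⊆ σ(L) ∪ σ(N)` for each distinguished
triangle `L → M → N → ΣL`. -/
structure SupportData (X : Type*) [TopologicalSpace X] where
  σ : C → Set X
  isClosed_σ : ∀ M : C, IsClosed (σ M)
  σ_zero : ∀ M : C, IsZero M → σ M = ∅
  σ_shift : ∀ (M : C) (n : ℤ), σ ((shiftFunctor C n).obj M) = σ M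
  σ_sum : ∀ M N : C, σ (M ⊞ N) = σ M ∪ σ N
  σ_triangle : ∀ T : Triangle C, (T ∈ distTriang C) → σ T.obj₂ ⊆ σ T.obj₁ ∪ σ T.obj₃

variable {C}

/-- `f_σ(𝒳) = ⋃_{M ∈ 𝒳} σ(M)`. -/
def SupportData.f {X : Type*} [TopologicalSpace X] (sd : SupportData C X)
    (S : Set C) : Set X := ⋃ M ∈ S, sd.σ M

/-- `g_σ(W) = {M : σ(M) ⊆ W}`. -/
def SupportData.g {X : Type*} [TopologicalSpace X] (sd : SupportData C X)
    (W : Set X) : Set C := {M : C | sd.σ M ⊆ W}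

/-- A subset of a topological space is specialization-closed if it contains the
closure of each of its points. -/
def SpclClosed {X : Type*} [TopologicalSpace X] (W : Set X) : Prop :=
  ∀ x ∈ W, closure {x} ⊆ W

variable (C)

/-- The smallest thick subcategory (as a set of objects) containing a given set. -/
def thickClosure (S : Set C) : Set C :=
  ⋂₀ {U : Set C | (∃ T : ThickSubcat C, T.set = U) ∧ S ⊆ U}

variable {C}

/-- Realization: for a classifying support data, every closed subset is the
support of some object. -/
theorem stmt1 {X : Type*} [TopologicalSpace X] [TopologicalSpace.NoetherianSpace X]
    [QuasiSober X] [T0Space X] (sd : SupportData C X)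
    (h1 : ∀ T : ThickSubcat C, sd.g (sd.f T.set) = T.set)
    (h2 : ∀ W : Set X, SpclClosed W → sd.f (sd.g W) = W) :
    ∀ Z : Set X, IsClosed Z → ∃ M : C, sd.σ M = Z := by
  -- Step 1: irreducible closed sets are realizable
  have hirr : ∀ Z : Set X, IsClosed Z → IsIrreducible Z → ∃ M : C, sd.σ M = Z := by
    intro Z hZc hZi
    obtain ⟨x, hx⟩ := QuasiSober.sober hZi hZc
    have hspcl : SpclClosed Z := by
      intro y hy
      rw [← hx] at hy ⊢
      exact closure_minimal (Set.singleton_subset_iff.mpr hy) isClosed_closure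
    have hxZ : x ∈ Z := by
      rw [← hx]; exact subset_closure rfl
    have := h2 Z hspcl
    rw [← this] at hxZ
    obtain ⟨M, hM, hxM⟩ := Set.mem_iUnion₂.mp hxZ
    refine ⟨M, le_antisymm hM ?_⟩
    rw [← hx]
    exact closure_minimal (Set.singleton_subset_iff.mpr hxM) (sd.isClosed_σ M)
  -- Step 2: decompose
  intro Z hZ
  obtain ⟨S, hSf, hSc, hSi, rfl⟩ :=
    TopologicalSpace.NoetherianSpace.exists_finite_set_isClosed_irreducible hZ
  clear hZ
  revert hSc hSi
  refine Set.Finite.induction_on (motive := fun S _ => (∀ t ∈ S, IsClosed t) →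
    (∀ t ∈ S, IsIrreducible t) → ∃ M : C, sd.σ M = ⋃₀ S) S hSf ?_ ?_
  · intro _ _
    obtain ⟨O, hO⟩ := HasZeroObject.zero (C := C)
    exact ⟨O, by simpa using sd.σ_zero O hO⟩
  · intro t S htS hSfin ih hSc hSi
    obtain ⟨M, hM⟩ := ih (fun u hu => hSc u (Set.mem_insert_of_mem _ hu))
      (fun u hu => hSi u (Set.mem_insert_of_mem _ hu))
    obtain ⟨N, hN⟩ := hirr t (hSc t (Set.mem_insert _ _)) (hSi t (Set.mem_insert _ _))
    refine ⟨N ⊞ M, ?_⟩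
    rw [sd.σ_sum, hN, hM, Set.sUnion_insert]
end

section
/- Let (X, σ) be a classifying support data for a triangulated category T, let W be an irreducible closed subset of X, and suppose g_σ(W) equals the smallest thick subcategory containing 𝒳₁ ∪ 𝒳₂ for principal thick subcategories 𝒳₁, 𝒳₂. Then 𝒳₁ = g_σ(W) or 𝒳₂ = g_σ(W); that is, g_σ(W) is an irreducible thick subcategory. -/
universe v u

open CategoryTheory Limits Pretriangulated

variable (C : Type u) [Category.{v} C] [Preadditive C] [HasZeroObject C]
  [HasBinaryBiproducts C] [HasShift C ℤ]
  [∀ n : ℤ, (CategoryTheory.shiftFunctor C n).Additive] [Pretriangulated C]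

variable {C}

variable (C)

variable {C}

open ZeroObject in
lemma sigma_iso_le {X : Type*} [TopologicalSpace X] (sd : SupportData C X)
    {M N : C} (e : M ≅ N) : sd.σ N ⊆ sd.σ M := by
  have hd : Triangle.mk e.hom (0 : N ⟶ (0 : C)) (0 : (0 : C) ⟶ M⟦(1 : ℤ)⟧) ∈
      distTriang C := by
    refine isomorphic_distinguished _ (contractible_distinguished M) _ ?_
    exact Triangle.isoMk _ _ (Iso.refl M) e.symm (Iso.refl 0) (e.hom_inv_id.trans (Category.comp_id _).symm) ((isZero_zero C).eq_of_tgt _ _)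
      ((isZero_zero C).eq_of_src _ _)
  have := sd.σ_triangle _ hd
  simpa [sd.σ_zero (0 : C) (isZero_zero C)] using this

/-- `g` of any set is a thick subcategory. -/
def SupportData.gThick {X : Type*} [TopologicalSpace X] (sd : SupportData C X)
    (S : Set X) : ThickSubcat C where
  set := sd.g S
  zero_mem M hM := by simp [SupportData.g, sd.σ_zero M hM]
  iso_mem e hM := (sigma_iso_le sd e).trans hM
  shift_mem M n hM := by simpa [SupportData.g, sd.σ_shift] using hM
  ext_mem T hT h1 h3 := ((sd.σ_triangle T hT).trans (Set.union_subset h1 h3))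
  summand_mem M N h := by
    have := sd.σ_sum M N
    exact fun x hx => h (by rw [this]; exact Or.inl hx)

lemma f_g_subset {X : Type*} [TopologicalSpace X] (sd : SupportData C X)
    (S : Set X) : sd.f (sd.g S) ⊆ S := by
  intro x hx
  simp only [SupportData.f, Set.mem_iUnion] at hx
  obtain ⟨M, hM, hxM⟩ := hx
  exact hM hxM

lemma thickClosure_subset {S : Set C} (T : ThickSubcat C) (h : S ⊆ T.set) :
    thickClosure C S ⊆ T.set :=
  Set.sInter_subset_of_mem ⟨⟨T, rfl⟩, h⟩

lemma subset_thickClosure (S : Set C) : S ⊆ thickClosure C S :=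
  fun _ hM _ hU => hU.2 hM

lemma sigma_subset_f {X : Type*} [TopologicalSpace X] (sd : SupportData C X)
    {S : Set C} {M : C} (hM : M ∈ S) : sd.σ M ⊆ sd.f S :=
  fun x hx => Set.mem_biUnion hM hx

/-- For a classifying support data and an irreducible closed subset `W`, if
`g_σ(W)` is the thick closure of the union of two principal thick subcategories,
then one of them equals `g_σ(W)`: i.e. `g_σ(W)` is an irreducible thick
subcategory. -/
theorem stmt5 {X : Type*} [TopologicalSpace X] [TopologicalSpace.NoetherianSpace X]
    [QuasiSober X] [T0Space X] (sd : SupportData C X)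
    (h1 : ∀ T : ThickSubcat C, sd.g (sd.f T.set) = T.set)
    (h2 : ∀ W : Set X, SpclClosed W → sd.f (sd.g W) = W)
    (W : Set X) (hWc : IsClosed W) (hWi : IsIrreducible W)
    (T₁ T₂ : ThickSubcat C) (M₁ M₂ : C)
    (hp₁ : T₁.set = thickClosure C {M₁}) (hp₂ : T₂.set = thickClosure C {M₂})
    (hg : sd.g W = thickClosure C (T₁.set ∪ T₂.set)) :
    T₁.set = sd.g W ∨ T₂.set = sd.g W := by
  -- f of a principal thick subcategory is σ of the generator
  have fT : ∀ (T : ThickSubcat C) (M : C), T.set = thickClosure C {M} →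
      sd.f T.set = sd.σ M := by
    intro T M hp
    apply Set.Subset.antisymm
    · have hsub : T.set ⊆ (sd.gThick (sd.σ M)).set := by
        rw [hp]
        exact thickClosure_subset _ (by
          intro x hx
          rw [Set.mem_singleton_iff] at hx
          subst hx
          exact fun _ h => h)
      refine (Set.iUnion₂_subset ?_)
      intro N hN
      exact hsub hN
    · exact sigma_subset_f sd (hp ▸ subset_thickClosure ({M} : Set C) rfl)
  have hf1 : sd.f T₁.set = sd.σ M₁ := fT T₁ M₁ hp₁
  have hf2 : sd.f T₂.set = sd.σ M₂ := fT T₂ M₂ hp₂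
  -- M₁, M₂ ∈ g W
  have hT1g : T₁.set ⊆ sd.g W := by
    rw [hg]
    exact (Set.subset_union_left).trans (subset_thickClosure _)
  have hT2g : T₂.set ⊆ sd.g W := by
    rw [hg]
    exact (Set.subset_union_right).trans (subset_thickClosure _)
  have hM1 : M₁ ∈ T₁.set := hp₁ ▸ subset_thickClosure ({M₁} : Set C) rfl
  have hM2 : M₂ ∈ T₂.set := hp₂ ▸ subset_thickClosure ({M₂} : Set C) rfl
  have hσ1W : sd.σ M₁ ⊆ W := hT1g hM1
  have hσ2W : sd.σ M₂ ⊆ W := hT2g hM2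
  -- W = σ M₁ ∪ σ M₂
  have hspcl : SpclClosed W := fun x hx => hWc.closure_subset_iff.mpr
    (Set.singleton_subset_iff.mpr hx)
  have hWeq : W = sd.σ M₁ ∪ sd.σ M₂ := by
    apply Set.Subset.antisymm
    · rw [← h2 W hspcl, hg]
      have hsub : thickClosure C (T₁.set ∪ T₂.set) ⊆
          (sd.gThick (sd.σ M₁ ∪ sd.σ M₂)).set := by
        apply thickClosure_subset
        rintro N (hN | hN)
        · exact (sigma_subset_f sd hN).trans (hf1 ▸ Set.subset_union_left)
        · exact (sigma_subset_f sd hN).trans (hf2 ▸ Set.subset_union_right)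
      exact fun x hx => f_g_subset sd _ (by
        simp only [SupportData.f, Set.mem_iUnion] at hx ⊢
        obtain ⟨N, hN, hxN⟩ := hx
        exact ⟨N, hsub hN, hxN⟩)
    · exact Set.union_subset hσ1W hσ2W
  -- irreducibility: W ⊆ σ M₁ or W ⊆ σ M₂
  have hcases : W ⊆ sd.σ M₁ ∨ W ⊆ sd.σ M₂ := by
    by_contra hcon
    push_neg at hcon
    obtain ⟨x, hxW, hx1⟩ := Set.not_subset.mp hcon.1
    obtain ⟨y, hyW, hy2⟩ := Set.not_subset.mp hcon.2
    obtain ⟨z, hzW, hz1, hz2⟩ := hWi.2 (sd.σ M₁)ᶜ (sd.σ M₂)ᶜ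
      (sd.isClosed_σ M₁).isOpen_compl (sd.isClosed_σ M₂).isOpen_compl
      ⟨x, hxW, hx1⟩ ⟨y, hyW, hy2⟩
    rcases hWeq ▸ hzW with h | h
    · exact hz1 h
    · exact hz2 h
  rcases hcases with h | h
  · left
    have : W = sd.f T₁.set := by
      rw [hf1]; exact Set.Subset.antisymm h hσ1W
    rw [this, h1 T₁]
  · right
    have : W = sd.f T₂.set := by
      rw [hf2]; exact Set.Subset.antisymm h hσ2W
    rw [this, h1 T₂]
end

section
/- Let T be a tensor triangulated category in which every object is strongly dualizable, and let M be an object with M^{⊗n} ≅ 0 for some n ≥ 1, and such that M^{⊗i} belongs to the thick tensor ideal generated by M^{⊗2i} for every i ≥ 1. Then M ≅ 0. -/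
universe v u

open CategoryTheory Limits Pretriangulated

variable (C : Type u) [Category.{v} C] [Preadditive C] [HasZeroObject C]
  [HasBinaryBiproducts C] [HasShift C ℤ]
  [∀ n : ℤ, (CategoryTheory.shiftFunctor C n).Additive] [Pretriangulated C]

variable {C}

variable (C)

open MonoidalCategory

variable [MonoidalCategory C] [SymmetricCategory C]

/-- `n`-fold tensor power of an object, with `M^{⊗0} = 𝟙` and `M^{⊗(n+1)} = M^{⊗n} ⊗ M`. -/
def tensorPow (M : C) : ℕ → C
  | 0 => 𝟙_ C
  | n + 1 => tensorPow M n ⊗ M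

/-- The smallest thick tensor ideal (as a set of objects) containing a given set. -/
def thickTensorIdealClosure (S : Set C) : Set C :=
  ⋂₀ {U : Set C | (∃ T : ThickSubcat C, T.set = U) ∧
      (∀ M ∈ U, ∀ N : C, (M ⊗ N) ∈ U) ∧ S ⊆ U}


section Aux

variable [RigidCategory C]

lemma isZero_tensor_right {N : C} (hN : IsZero N) (P : C) : IsZero (N ⊗ P) := by
  have : (tensorRight P).IsLeftAdjoint := (tensorRightAdjunction P (Pᘁ)).isLeftAdjoint
  exact (tensorRight P).map_isZero hN

/-- The zero objects form a thick subcategory. -/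
def zeroThick : ThickSubcat C where
  set := {N | IsZero N}
  zero_mem := fun _ h => h
  iso_mem := fun e h => h.of_iso e.symm
  shift_mem := fun _ n h => (shiftFunctor C n).map_isZero h
  ext_mem := fun T hT h1 h3 => T.isZero₂_of_isZero₁₃ hT h1 h3
  summand_mem := fun M N h => ((biprod_isZero_iff M N).1 h).1

lemma closure_zero {X : C} (hX : IsZero X) {N : C}
    (hN : N ∈ thickTensorIdealClosure C {X}) : IsZero N :=
  hN {N | IsZero N}
    ⟨⟨zeroThick C, rfl⟩, fun _ hM P => isZero_tensor_right C hM P,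
      by simpa using hX⟩

end Aux

/-- In a tensor triangulated category in which every object is strongly dualizable
(a rigid category), if `M^{⊗n} ≅ 0` for some `n ≥ 1` and `M^{⊗i}` lies in the
thick tensor ideal generated by `M^{⊗2i}` for all `i ≥ 1`, then `M ≅ 0`. -/
theorem stmt6 [RigidCategory C] (M : C) (n : ℕ) (hn : 1 ≤ n)
    (h0 : IsZero (tensorPow C M n))
    (h : ∀ i : ℕ, 1 ≤ i →
      tensorPow C M i ∈ thickTensorIdealClosure C {tensorPow C M (2 * i)}) :
    IsZero M := by
  -- Step 1: tensor powers above `n` are zero.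
  have hup : ∀ k, n ≤ k → IsZero (tensorPow C M k) := by
    intro k hk
    induction k with
    | zero => exact absurd hk (by omega)
    | succ k ih =>
      rcases Nat.lt_or_ge n (k+1) with hlt | hge
      · exact isZero_tensor_right C (ih (by omega)) M
      · obtain rfl := le_antisymm hk hge; exact h0
  -- Step 2: downward induction on tensor powers.
  have hdown : ∀ k : ℕ, ∀ i : ℕ, 1 ≤ i → n ≤ 2 ^ k * i → IsZero (tensorPow C M i) := by
    intro k
    induction k with
    | zero => intro i hi hni; exact hup i (by simpa using hni)
    | succ k ih =>
      intro i hi hni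
      have h2i : IsZero (tensorPow C M (2 * i)) :=
        ih (2 * i) (by omega) (by rw [pow_succ, mul_assoc] at hni; exact hni)
      exact closure_zero C h2i (h i hi)
  have h1 : IsZero (tensorPow C M 1) :=
    hdown n 1 le_rfl (by simpa using (Nat.lt_two_pow_self (n := n)).le)
  exact h1.of_iso (λ_ M).symm
end

section
/- Let k be a field of characteristic zero, T = k[[x,y]], R = k[[x,y,z]]/(x²y + z²), and M = (x,z) ⊆ R, identified inside the total quotient ring Q(R) via f ↦ f(x)/x. Then End_R(M) = Hom_R(M,R) = {a/x : az ∈ xR} = T + (z/x)T. -/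
noncomputable section
set_option synthInstance.maxHeartbeats 1000000
set_option maxHeartbeats 1000000

open MvPowerSeries

variable (k : Type*) [Field k] [CharZero k] [IsAlgClosed k]

/-- `S = k[[x,y,z]]`. -/
abbrev Sd := MvPowerSeries (Fin 3) k

/-- the defining equation `x²y + z²` of the `(D_∞)` singularity. -/
def fd : Sd k := (X 0 : Sd k) ^ 2 * X 1 + (X 2 : Sd k) ^ 2

/-- `R = k[[x,y,z]]/(x²y + z²)`, the two-dimensional `(D_∞)` hypersurface. -/
abbrev Rd := Sd k ⧸ Ideal.span {fd k}

/-- the quotient map `S → R`. -/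
def mkd : Sd k →+* Rd k := Ideal.Quotient.mk _

def xd : Rd k := mkd k (X 0)
def yd : Rd k := mkd k (X 1)
def zd : Rd k := mkd k (X 2)

/-- the total quotient ring `Q(R)`. -/
abbrev Qd := FractionRing (Rd k)

/-- the natural map `R → Q(R)`. -/
def ιd : Rd k →+* Qd k := algebraMap _ _

/-- the image in `Q(R)` of the maximal Cohen-Macaulay module `M = (x,z) ⊆ R`,
under the identification `f ↦ f(x)/x`. -/
def Md : Set (Qd k) :=
  (Submodule.map (Algebra.linearMap (Rd k) (Qd k))
    (Ideal.span {xd k, zd k}) : Submodule (Rd k) (Qd k))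

/-- a power series in `x, y, z` which involves only `x` and `y` (i.e. lies in
`T = k[[x,y]]`). -/
def NoZ (t : Sd k) : Prop :=
  ∀ m : Fin 3 →₀ ℕ, m 2 ≠ 0 → MvPowerSeries.coeff m t = 0

/-- `End_R(M)` identified with an `R`-submodule of `Q(R)` via `f ↦ f(x)/x`. -/
def Ed : Set (Qd k) := {q : Qd k | ∀ m ∈ Md k, q * m ∈ Md k}

/-- `Hom_R(M, R)` identified with an `R`-submodule of `Q(R)` via `f ↦ f(x)/x`. -/
def Hd : Set (Qd k) := {q : Qd k | ∀ m ∈ Md k, q * m ∈ Set.range (ιd k)}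

def tri (a b c : ℕ) : Fin 3 →₀ ℕ :=
  Finsupp.single 0 a + Finsupp.single 1 b + Finsupp.single 2 c
@[simp] lemma tri_apply_0 (a b c : ℕ) : tri a b c 0 = a := by
  simp [tri, Finsupp.single_apply]
@[simp] lemma tri_apply_1 (a b c : ℕ) : tri a b c 1 = b := by
  simp [tri, Finsupp.single_apply]
@[simp] lemma tri_apply_2 (a b c : ℕ) : tri a b c 2 = c := by
  simp [tri, Finsupp.single_apply]
lemma eq_tri (m : Fin 3 →₀ ℕ) : m = tri (m 0) (m 1) (m 2) := by
  ext i; fin_cases i <;> simp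
lemma tri_le_tri_iff {a b c a' b' c' : ℕ} :
    tri a b c ≤ tri a' b' c' ↔ a ≤ a' ∧ b ≤ b' ∧ c ≤ c' := by
  constructor
  · intro h
    exact ⟨by simpa using h 0, by simpa using h 1, by simpa using h 2⟩
  · rintro ⟨h1, h2, h3⟩ i
    fin_cases i <;> simpa
lemma tri_sub_tri (a b c a' b' c' : ℕ) :
    tri a b c - tri a' b' c' = tri (a - a') (b - b') (c - c') := by
  ext i; fin_cases i <;> simp [Finsupp.tsub_apply]
def mkS (f : (Fin 3 →₀ ℕ) → k) : Sd k := f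
@[simp] lemma coeff_mkS (f : (Fin 3 →₀ ℕ) → k) (m : Fin 3 →₀ ℕ) :
    MvPowerSeries.coeff m (mkS k f) = f m := rfl

-- fd as sum of monomials
lemma fd_eq : fd k = monomial (tri 2 1 0) 1 + monomial (tri 0 0 2) 1 := by
  have e1 : Finsupp.single (0 : Fin 3) 2 + Finsupp.single (1 : Fin 3) 1 = tri 2 1 0 := by
    ext i; fin_cases i <;> simp [tri, Finsupp.single_apply]
  have e2 : Finsupp.single (2 : Fin 3) 2 = tri 0 0 2 := by
    ext i; fin_cases i <;> simp [tri, Finsupp.single_apply]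
  have h1 : (X 0 : Sd k) ^ 2 * X 1 = monomial (tri 2 1 0) 1 := by
    rw [X_pow_eq, X, monomial_mul_monomial, one_mul, e1]
  have h2 : (X 2 : Sd k) ^ 2 = monomial (tri 0 0 2) 1 := by
    rw [X_pow_eq, e2]
  rw [fd, h1, h2]

lemma coeff_fd_mul (H : Sd k) (a b c : ℕ) :
    MvPowerSeries.coeff (tri a b c) (fd k * H) =
      (if 2 ≤ a ∧ 1 ≤ b then MvPowerSeries.coeff (tri (a-2) (b-1) c) H else 0) +
      (if 2 ≤ c then MvPowerSeries.coeff (tri a b (c-2)) H else 0) := by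
  rw [fd_eq, add_mul, map_add, coeff_monomial_mul, coeff_monomial_mul]
  congr 1
  · rcases Classical.em (2 ≤ a ∧ 1 ≤ b) with h | h
    · rw [if_pos, if_pos h, one_mul, tri_sub_tri, Nat.sub_zero]
      rw [tri_le_tri_iff]; exact ⟨h.1, h.2, Nat.zero_le _⟩
    · rw [if_neg, if_neg h]
      rw [tri_le_tri_iff]; intro ⟨h1, h2, _⟩; exact h ⟨h1, h2⟩
  · rcases Classical.em (2 ≤ c) with h | h
    · rw [if_pos, if_pos h, one_mul, tri_sub_tri, Nat.sub_zero, Nat.sub_zero]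
      rw [tri_le_tri_iff]; exact ⟨Nat.zero_le _, Nat.zero_le _, h⟩
    · rw [if_neg, if_neg h]
      rw [tri_le_tri_iff]; intro ⟨_, _, h3⟩; exact h h3

lemma coeff_X2_mul (H : Sd k) (a b c : ℕ) :
    MvPowerSeries.coeff (tri a b c) ((X 2 : Sd k) * H) =
      if 1 ≤ c then MvPowerSeries.coeff (tri a b (c-1)) H else 0 := by
  rw [X, coeff_monomial_mul]
  rcases Classical.em (1 ≤ c) with h | h
  · have e : (Finsupp.single (2 : Fin 3) 1) = tri 0 0 1 := by
      ext i; fin_cases i <;> simp [tri, Finsupp.single_apply]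
    rw [if_pos, if_pos h, one_mul]
    · rw [e, tri_sub_tri, Nat.sub_zero, Nat.sub_zero]
    · rw [e, tri_le_tri_iff]; exact ⟨Nat.zero_le _, Nat.zero_le _, h⟩
  · rw [if_neg, if_neg h]
    intro hle
    exact h (by simpa using hle 2)

/-- the quotient coefficient function in division of `g` by `fd` -/
def hcoef (g : Sd k) : ℕ → ℕ → ℕ → k
  | a+2, b+1, c => MvPowerSeries.coeff (tri (a+2) (b+1) (c+2)) g - hcoef g a b (c+2)
  | 0, b, c => MvPowerSeries.coeff (tri 0 b (c+2)) g
  | 1, b, c => MvPowerSeries.coeff (tri 1 b (c+2)) g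
  | a+2, 0, c => MvPowerSeries.coeff (tri (a+2) 0 (c+2)) g

lemma hcoef_eq (g : Sd k) (a b c : ℕ) :
    hcoef k g a b c = MvPowerSeries.coeff (tri a b (c+2)) g -
      (if 2 ≤ a ∧ 1 ≤ b then hcoef k g (a-2) (b-1) (c+2) else 0) := by
  match a, b with
  | a+2, b+1 => simp [hcoef]
  | 0, b => simp [hcoef]
  | 1, b => simp [hcoef]
  | a+2, 0 => simp [hcoef]
/-- quotient in the division of `g` by `fd` -/
def Hq (g : Sd k) : Sd k := mkS k (fun m => hcoef k g (m 0) (m 1) (m 2))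

@[simp] lemma coeff_Hq (g : Sd k) (a b c : ℕ) :
    MvPowerSeries.coeff (tri a b c) (Hq k g) = hcoef k g a b c := by
  simp [Hq]

def remd (g : Sd k) : Sd k := g - fd k * Hq k g

lemma coeff_remd_z (g : Sd k) (a b c : ℕ) (hc : 2 ≤ c) :
    MvPowerSeries.coeff (tri a b c) (remd k g) = 0 := by
  obtain ⟨c, rfl⟩ : ∃ c', c = c' + 2 := ⟨c - 2, by omega⟩
  rw [remd, map_sub, coeff_fd_mul]
  simp only [Nat.add_sub_cancel, le_add_iff_nonneg_left, Nat.zero_le, if_true, coeff_Hq]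
  rw [hcoef_eq k g a b c]
  ring

def T1 (g : Sd k) : Sd k :=
  mkS k (fun m => if m 2 = 0 then MvPowerSeries.coeff m (remd k g) else 0)

def T2 (g : Sd k) : Sd k :=
  mkS k (fun m => if m 2 = 0 then
    MvPowerSeries.coeff (tri (m 0) (m 1) 1) (remd k g) else 0)

lemma NoZ_T1 (g : Sd k) : NoZ k (T1 k g) := by
  intro m hm; simp [T1, hm]

lemma NoZ_T2 (g : Sd k) : NoZ k (T2 k g) := by
  intro m hm; simp [T2, hm]

/-- existence of the Weierstrass-type decomposition -/
lemma decomp (g : Sd k) : g = fd k * Hq k g + T1 k g + X 2 * T2 k g := by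
  ext m
  rw [eq_tri m]
  set a := m 0; set b := m 1; set c := m 2
  rw [map_add, map_add, coeff_X2_mul]
  have hT1 : MvPowerSeries.coeff (tri a b c) (T1 k g) =
      if c = 0 then MvPowerSeries.coeff (tri a b c) (remd k g) else 0 := by
    simp [T1]
  match c with
  | 0 =>
    rw [hT1, if_pos rfl, if_neg (by omega)]
    simp [remd]
  | 1 =>
    rw [hT1, if_neg (by omega), if_pos (by omega)]
    have : MvPowerSeries.coeff (tri a b (1-1)) (T2 k g) =
        MvPowerSeries.coeff (tri a b 1) (remd k g) := by
      simp [T2]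
    rw [this]
    simp [remd]
  | c + 2 =>
    rw [hT1, if_neg (by omega), if_pos (by omega)]
    have : MvPowerSeries.coeff (tri a b (c+2-1)) (T2 k g) = 0 := by
      simp only [T2, coeff_mkS]
      rw [if_neg (by simp)]
    rw [this, add_zero, add_zero]
    have h0 := coeff_remd_z k g a b (c+2) (by omega)
    rw [remd, map_sub, sub_eq_zero] at h0
    exact h0

/-- uniqueness -/
lemma uniq (H t₁ t₂ : Sd k) (h1 : NoZ k t₁) (h2 : NoZ k t₂)
    (h : fd k * H + t₁ + X 2 * t₂ = 0) : H = 0 ∧ t₁ = 0 ∧ t₂ = 0 := by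
  have key : ∀ a b c, MvPowerSeries.coeff (tri a b c) H = 0 := by
    intro a
    induction a using Nat.strong_induction_on with
    | _ a IH =>
      intro b c
      have hc := congrArg (MvPowerSeries.coeff (tri a b (c+2))) h
      rw [map_add, map_add, coeff_fd_mul, coeff_X2_mul, map_zero] at hc
      rw [h1 _ (by simp), h2 _ (by simp)] at hc
      simp only [if_pos (by omega : 1 ≤ c + 2), Nat.add_sub_cancel, add_zero] at hc
      by_cases hab : 2 ≤ a ∧ 1 ≤ b
      · rw [if_pos hab, IH (a-2) (by omega) (b-1) (c+2)] at hc
        simpa using hc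
      · rw [if_neg hab] at hc
        simpa using hc
  have hH : H = 0 := by
    ext m; rw [map_zero, eq_tri m]; exact key _ _ _
  rw [hH, mul_zero, zero_add] at h
  have ht1 : t₁ = 0 := by
    ext m
    rw [map_zero]
    by_cases hm : m 2 = 0
    · have hc := congrArg (MvPowerSeries.coeff (tri (m 0) (m 1) (m 2))) h
      rw [map_add, coeff_X2_mul, if_neg (by omega), add_zero] at hc
      rw [eq_tri m]; exact hc.trans (map_zero _)
    · exact h1 m hm
  rw [ht1, zero_add] at h
  have ht2 : t₂ = 0 := by
    ext m
    rw [map_zero]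
    by_cases hm : m 2 = 0
    · have hc := congrArg (MvPowerSeries.coeff (tri (m 0) (m 1) 1)) h
      rw [coeff_X2_mul, if_pos (by omega)] at hc
      rw [eq_tri m, hm]
      simpa using hc.trans (map_zero _)
    · exact h2 m hm
  exact ⟨hH, ht1, ht2⟩

section
variable {k}

lemma NoZ.add {s t : Sd k} (hs : NoZ k s) (ht : NoZ k t) : NoZ k (s + t) := by
  intro m hm; rw [map_add, hs m hm, ht m hm, add_zero]

lemma NoZ.neg {s : Sd k} (hs : NoZ k s) : NoZ k (-s) := by
  intro m hm; rw [map_neg, hs m hm, neg_zero]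

lemma NoZ.sub {s t : Sd k} (hs : NoZ k s) (ht : NoZ k t) : NoZ k (s - t) := by
  intro m hm; rw [map_sub, hs m hm, ht m hm, sub_zero]

lemma NoZ.mul {s t : Sd k} (hs : NoZ k s) (ht : NoZ k t) : NoZ k (s * t) := by
  intro m hm
  rw [coeff_mul]
  apply Finset.sum_eq_zero
  rintro ⟨p, q⟩ hpq
  rw [Finset.HasAntidiagonal.mem_antidiagonal] at hpq
  have : p 2 ≠ 0 ∨ q 2 ≠ 0 := by
    by_contra hcon
    push_neg at hcon
    apply hm
    rw [← hpq, Finsupp.add_apply, hcon.1, hcon.2]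
  rcases this with h | h
  · rw [hs p h, zero_mul]
  · rw [ht q h, mul_zero]

lemma NoZ_X0 : NoZ k (X 0 : Sd k) := by
  intro m hm
  rw [coeff_X, if_neg]
  rintro rfl
  exact hm (by simp [Finsupp.single_apply])

lemma NoZ_X1 : NoZ k (X 1 : Sd k) := by
  intro m hm
  rw [coeff_X, if_neg]
  rintro rfl
  exact hm (by simp [Finsupp.single_apply])

lemma NoZ_zero : NoZ k (0 : Sd k) := by intro m _; simp

variable (k)

/-- every element of `R` has a canonical representative -/
lemma repr_exists (r : Rd k) : ∃ t₁ t₂ : Sd k, NoZ k t₁ ∧ NoZ k t₂ ∧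
    r = mkd k (t₁ + X 2 * t₂) := by
  obtain ⟨g, rfl⟩ := Ideal.Quotient.mk_surjective r
  refine ⟨T1 k g, T2 k g, NoZ_T1 k g, NoZ_T2 k g, ?_⟩
  show mkd k g = _
  conv_lhs => rw [decomp k g]
  rw [map_add, map_add]
  have : mkd k (fd k * Hq k g) = 0 := by
    rw [mkd, Ideal.Quotient.eq_zero_iff_mem]
    exact Ideal.mul_mem_right _ _ (Ideal.subset_span rfl)
  rw [this, zero_add, ← map_add]

lemma mk_eq_zero_iff {t₁ t₂ : Sd k} (h1 : NoZ k t₁) (h2 : NoZ k t₂) :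
    mkd k (t₁ + X 2 * t₂) = 0 ↔ t₁ = 0 ∧ t₂ = 0 := by
  constructor
  · intro h
    rw [mkd, Ideal.Quotient.eq_zero_iff_mem, Ideal.mem_span_singleton'] at h
    obtain ⟨H, hH⟩ := h
    have : fd k * (-H) + t₁ + X 2 * t₂ = 0 := by
      rw [add_assoc, ← hH]; ring
    obtain ⟨_, e1, e2⟩ := uniq k (-H) t₁ t₂ h1 h2 this
    exact ⟨e1, e2⟩
  · rintro ⟨rfl, rfl⟩; simp

lemma mk_eq_iff {t₁ t₂ s₁ s₂ : Sd k} (h1 : NoZ k t₁) (h2 : NoZ k t₂)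
    (h3 : NoZ k s₁) (h4 : NoZ k s₂) :
    mkd k (t₁ + X 2 * t₂) = mkd k (s₁ + X 2 * s₂) ↔ t₁ = s₁ ∧ t₂ = s₂ := by
  constructor
  · intro h
    have : mkd k ((t₁ - s₁) + X 2 * (t₂ - s₂)) = 0 := by
      rw [show (t₁ - s₁) + X 2 * (t₂ - s₂) = (t₁ + X 2 * t₂) - (s₁ + X 2 * s₂) by ring,
        map_sub, h, sub_self]
    obtain ⟨e1, e2⟩ := (mk_eq_zero_iff k (h1.sub h3) (h2.sub h4)).mp this
    constructor <;> [skip; skip] <;>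
      first
        | exact sub_eq_zero.mp e1
        | exact sub_eq_zero.mp e2
  · rintro ⟨rfl, rfl⟩; rfl

lemma X0_ne_zero : (X 0 : Sd k) ≠ 0 := by
  intro h
  have := congrArg (MvPowerSeries.coeff (Finsupp.single 0 1)) h
  rw [coeff_X, if_pos rfl, map_zero] at this
  exact one_ne_zero this

lemma xd_mem_nonZeroDivisors : xd k ∈ nonZeroDivisors (Rd k) := by
  rw [mem_nonZeroDivisors_iff_right]
  intro r hr
  obtain ⟨t₁, t₂, h1, h2, rfl⟩ := repr_exists k r
  have key : mkd k (t₁ + X 2 * t₂) * xd k = mkd k ((X 0 * t₁) + X 2 * (X 0 * t₂)) := by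
    rw [xd, ← map_mul]
    congr 1
    ring
  rw [key, mk_eq_zero_iff k (NoZ_X0.mul h1) (NoZ_X0.mul h2)] at hr
  have e1 : t₁ = 0 := by
    rcases mul_eq_zero.mp hr.1 with h | h
    · exact absurd h (X0_ne_zero k)
    · exact h
  have e2 : t₂ = 0 := by
    rcases mul_eq_zero.mp hr.2 with h | h
    · exact absurd h (X0_ne_zero k)
    · exact h
  rw [e1, e2]
  simp

end

lemma mk_fd_zero : mkd k (fd k) = 0 := by
  rw [mkd, Ideal.Quotient.eq_zero_iff_mem]
  exact Ideal.subset_span rfl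

/-- `z² = -x²y` in `R`, at the level of representatives -/
lemma mk_X2_sq (t : Sd k) : mkd k (X 2 ^ 2 * t) = mkd k (-(X 0 ^ 2 * X 1 * t)) := by
  have : X 2 ^ 2 * t - (-(X 0 ^ 2 * X 1 * t)) = fd k * t := by rw [fd]; ring
  rw [mkd, Ideal.Quotient.eq, this]
  exact Ideal.mul_mem_right _ _ (Ideal.subset_span rfl)

lemma mem_span_x_iff {t₁ t₂ : Sd k} (h1 : NoZ k t₁) (h2 : NoZ k t₂) :
    mkd k (t₁ + X 2 * t₂) ∈ Ideal.span {xd k} ↔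
      ∃ u₁ u₂ : Sd k, NoZ k u₁ ∧ NoZ k u₂ ∧ t₁ = X 0 * u₁ ∧ t₂ = X 0 * u₂ := by
  constructor
  · intro h
    rw [Ideal.mem_span_singleton'] at h
    obtain ⟨r, hr⟩ := h
    obtain ⟨s₁, s₂, hs1, hs2, rfl⟩ := repr_exists k r
    have : mkd k ((X 0 * s₁) + X 2 * (X 0 * s₂)) = mkd k (t₁ + X 2 * t₂) := by
      rw [← hr, xd, ← map_mul]
      congr 1
      ring
    obtain ⟨e1, e2⟩ := (mk_eq_iff k (NoZ_X0.mul hs1) (NoZ_X0.mul hs2) h1 h2).mp this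
    exact ⟨s₁, s₂, hs1, hs2, e1.symm, e2.symm⟩
  · rintro ⟨u₁, u₂, hu1, hu2, rfl, rfl⟩
    rw [Ideal.mem_span_singleton']
    refine ⟨mkd k (u₁ + X 2 * u₂), ?_⟩
    rw [xd, ← map_mul]
    congr 1
    ring

lemma mem_span_xz_iff {t₁ t₂ : Sd k} (h1 : NoZ k t₁) (h2 : NoZ k t₂) :
    mkd k (t₁ + X 2 * t₂) ∈ Ideal.span {xd k, zd k} ↔
      ∃ u₁ : Sd k, NoZ k u₁ ∧ t₁ = X 0 * u₁ := by
  constructor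
  · intro h
    rw [Ideal.mem_span_pair] at h
    obtain ⟨r, s, hrs⟩ := h
    obtain ⟨r₁, r₂, hr1, hr2, rfl⟩ := repr_exists k r
    obtain ⟨s₁, s₂, hs1, hs2, rfl⟩ := repr_exists k s
    have key : mkd k ((X 0 * r₁ - X 0 ^ 2 * X 1 * s₂) + X 2 * (X 0 * r₂ + s₁)) =
        mkd k (t₁ + X 2 * t₂) := by
      rw [← hrs, xd, zd, ← map_mul, ← map_mul, ← map_add]
      rw [mkd, Ideal.Quotient.eq]
      have : (X 0 * r₁ - X 0 ^ 2 * X 1 * s₂) + X 2 * (X 0 * r₂ + s₁) -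
          ((r₁ + X 2 * r₂) * X 0 + (s₁ + X 2 * s₂) * X 2) = fd k * (-s₂) := by
        rw [fd]; ring
      rw [this]
      exact Ideal.mul_mem_right _ _ (Ideal.subset_span rfl)
    have nozsq : NoZ k ((X 0 : Sd k) ^ 2) := by
      rw [sq]; exact NoZ_X0.mul NoZ_X0
    have noz : NoZ k (X 0 * r₁ - X 0 ^ 2 * X 1 * s₂) :=
      (NoZ_X0.mul hr1).sub (((nozsq).mul NoZ_X1).mul hs2)
    obtain ⟨e1, _⟩ := (mk_eq_iff k noz ((NoZ_X0.mul hr2).add hs1) h1 h2).mp key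
    refine ⟨r₁ - X 0 * X 1 * s₂, hr1.sub ((NoZ_X0.mul NoZ_X1).mul hs2), ?_⟩
    rw [← e1]
    ring
  · rintro ⟨u₁, hu1, rfl⟩
    rw [Ideal.mem_span_pair]
    refine ⟨mkd k u₁, mkd k t₂, ?_⟩
    rw [xd, zd, ← map_mul, ← map_mul, ← map_add]
    congr 1
    ring


lemma ι_inj : Function.Injective (ιd k) := IsFractionRing.injective (Rd k) (Qd k)

lemma ιx_isUnit : IsUnit (ιd k (xd k)) :=
  IsLocalization.map_units (M := nonZeroDivisors (Rd k)) (Qd k)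
    ⟨xd k, xd_mem_nonZeroDivisors k⟩

lemma mem_Md {q : Qd k} : q ∈ Md k ↔ ∃ a ∈ Ideal.span {xd k, zd k}, ιd k a = q := by
  simp only [Md, SetLike.mem_coe, Submodule.mem_map, Algebra.linearMap_apply]
  rfl

lemma E_sub_H : Ed k ⊆ Hd k := by
  intro q hq m hm
  obtain ⟨a, _, ha⟩ := (mem_Md k).mp (hq m hm)
  exact ⟨a, ha⟩

lemma H_sub_S2 : Hd k ⊆ {q : Qd k | ∃ a : Rd k,
    q * ιd k (xd k) = ιd k a ∧ a * zd k ∈ Ideal.span {xd k}} := by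
  intro q hq
  have hxM : ιd k (xd k) ∈ Md k :=
    (mem_Md k).mpr ⟨xd k, Ideal.subset_span (by simp), rfl⟩
  have hzM : ιd k (zd k) ∈ Md k :=
    (mem_Md k).mpr ⟨zd k, Ideal.subset_span (by simp), rfl⟩
  obtain ⟨a, ha⟩ := hq _ hxM
  obtain ⟨b, hb⟩ := hq _ hzM
  refine ⟨a, ha.symm, ?_⟩
  rw [Ideal.mem_span_singleton']
  refine ⟨b, ι_inj k ?_⟩
  rw [map_mul, map_mul, hb, ha]
  ring

lemma S2_sub_S3 : {q : Qd k | ∃ a : Rd k,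
      q * ιd k (xd k) = ιd k a ∧ a * zd k ∈ Ideal.span {xd k}} ⊆
    {q : Qd k | ∃ t₁ t₂ : Sd k, NoZ k t₁ ∧ NoZ k t₂ ∧
      q * ιd k (xd k) = ιd k (mkd k (t₁ * X 0 + X 2 * t₂))} := by
  rintro q ⟨a, hqa, haz⟩
  obtain ⟨t₁, t₂, h1, h2, rfl⟩ := repr_exists k a
  have key : mkd k (t₁ + X 2 * t₂) * zd k =
      mkd k ((-(X 0 ^ 2 * X 1 * t₂)) + X 2 * t₁) := by
    rw [zd, ← map_mul, mkd, Ideal.Quotient.eq]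
    have : (t₁ + X 2 * t₂) * X 2 - ((-(X 0 ^ 2 * X 1 * t₂)) + X 2 * t₁) =
        fd k * t₂ := by rw [fd]; ring
    rw [this]
    exact Ideal.mul_mem_right _ _ (Ideal.subset_span rfl)
  rw [key] at haz
  have nozsq : NoZ k ((X 0 : Sd k) ^ 2) := by rw [sq]; exact NoZ_X0.mul NoZ_X0
  have noz1 : NoZ k (-(X 0 ^ 2 * X 1 * t₂)) := ((nozsq.mul NoZ_X1).mul h2).neg
  rw [mem_span_x_iff k noz1 h1] at haz
  obtain ⟨u₁, u₂, hu1, hu2, _, ht1⟩ := haz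
  refine ⟨u₂, t₂, hu2, h2, ?_⟩
  rw [hqa, ht1]
  congr 2
  ring

lemma S3_sub_E : {q : Qd k | ∃ t₁ t₂ : Sd k, NoZ k t₁ ∧ NoZ k t₂ ∧
      q * ιd k (xd k) = ιd k (mkd k (t₁ * X 0 + X 2 * t₂))} ⊆ Ed k := by
  rintro q ⟨u, v, hu, hv, hq⟩
  set a : Rd k := mkd k (u * X 0 + X 2 * v) with ha_def
  set b : Rd k := mkd k (u * X 2 - X 0 * X 1 * v) with hb_def
  have hab : a * zd k = b * xd k := by
    rw [ha_def, hb_def, zd, xd, ← map_mul, ← map_mul, mkd, Ideal.Quotient.eq]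
    have : (u * X 0 + X 2 * v) * X 2 - (u * X 2 - X 0 * X 1 * v) * X 0 =
        fd k * v := by rw [fd]; ring
    rw [this]
    exact Ideal.mul_mem_right _ _ (Ideal.subset_span rfl)
  have hqz : q * ιd k (zd k) = ιd k b := by
    refine (ιx_isUnit k).mul_right_cancel ?_
    calc q * ιd k (zd k) * ιd k (xd k)
        = q * ιd k (xd k) * ιd k (zd k) := by ring
      _ = ιd k a * ιd k (zd k) := by rw [hq]
      _ = ιd k (a * zd k) := by rw [map_mul]
      _ = ιd k (b * xd k) := by rw [hab]
      _ = ιd k b * ιd k (xd k) := by rw [map_mul]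
  have haM : a ∈ Ideal.span {xd k, zd k} := by
    rw [Ideal.mem_span_pair]
    refine ⟨mkd k u, mkd k v, ?_⟩
    rw [ha_def, xd, zd, ← map_mul, ← map_mul, ← map_add]
    congr 1
    ring
  have hbM : b ∈ Ideal.span {xd k, zd k} := by
    rw [Ideal.mem_span_pair]
    refine ⟨mkd k (-(X 1 * v)), mkd k u, ?_⟩
    rw [hb_def, xd, zd, ← map_mul, ← map_mul, ← map_add]
    congr 1
    ring
  intro m hm
  obtain ⟨c, hc, rfl⟩ := (mem_Md k).mp hm
  obtain ⟨r, s, hrs⟩ := Ideal.mem_span_pair.mp hc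
  have hqc : q * ιd k c = ιd k (r * a + s * b) := by
    calc q * ιd k c = ιd k r * (q * ιd k (xd k)) + ιd k s * (q * ιd k (zd k)) := by
          rw [← hrs, map_add, map_mul, map_mul]; ring
      _ = ιd k r * ιd k a + ιd k s * ιd k b := by rw [hq, hqz]
      _ = ιd k (r * a + s * b) := by rw [map_add, map_mul, map_mul]
  refine (mem_Md k).mpr ⟨r * a + s * b, ?_, hqc.symm⟩
  exact Ideal.add_mem _ (Ideal.mul_mem_left _ _ haM) (Ideal.mul_mem_left _ _ hbM)


/-- For the `(D_∞)` hypersurface `R = k[[x,y,z]]/(x²y + z²)` and `M = (x,z) ⊆ R`,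
identified inside `Q(R)` via `f ↦ f(x)/x`:
`End_R(M) = Hom_R(M,R) = {a/x : az ∈ xR} = T + (z/x)T` where `T = k[[x,y]]`.
(An element `q ∈ Q(R)` equals `a/x` iff `q·x = a`, and equals `t₁ + (z/x)t₂`
iff `q·x = t₁x + z·t₂`, since `x` is invertible in `Q(R)`.) -/
theorem stmt12 :
    Ed k = Hd k ∧
    Hd k = {q : Qd k | ∃ a : Rd k,
      q * ιd k (xd k) = ιd k a ∧ a * zd k ∈ Ideal.span {xd k}} ∧
    Hd k = {q : Qd k | ∃ t₁ t₂ : Sd k, NoZ k t₁ ∧ NoZ k t₂ ∧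
      q * ιd k (xd k) = ιd k (mkd k (t₁ * X 0 + X 2 * t₂))} := by
  refine ⟨?_, ?_, ?_⟩
  · exact Set.Subset.antisymm (E_sub_H k)
      (fun q hq => S3_sub_E k (S2_sub_S3 k (H_sub_S2 k hq)))
  · exact Set.Subset.antisymm (H_sub_S2 k)
      (fun q hq => E_sub_H k (S3_sub_E k (S2_sub_S3 k hq)))
  · exact Set.Subset.antisymm (fun q hq => S2_sub_S3 k (H_sub_S2 k hq))
      (fun q hq => E_sub_H k (S3_sub_E k hq))

end
end

section
/- With R = k[[x,y,z]]/(x²y + z²) and M = (x,z)R identified inside Q(R) as in the (D_∞) computation, the submodule P_R(M,M) of endomorphisms of M factoring through a free R-module equals M itself (under the identification End_R(M) = T + (z/x)T ⊆ Q(R)). -/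
noncomputable section
set_option synthInstance.maxHeartbeats 1000000
set_option maxHeartbeats 1000000

open MvPowerSeries

variable (k : Type*) [Field k] [CharZero k] [IsAlgClosed k]

/-- The endomorphisms of `M` factoring through a free `R`-module, identified
inside `Q(R)`: finite sums of composites `β ∘ α` with `α ∈ Hom_R(M,R)` and
`β ∈ M ≅ Hom_R(R,M)`, i.e. finite sums `∑ βᵢ·αᵢ` with `αᵢ ∈ H`, `βᵢ ∈ M`. -/
def Pd : Set (Qd k) :=
  {q : Qd k | ∃ (r : ℕ) (α β : Fin r → Qd k),
    (∀ i, α i ∈ Hd k) ∧ (∀ i, β i ∈ Md k) ∧ q = ∑ i, β i * α i}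


namespace MyAux

variable {σ : Type*} {K : Type*} [CommRing K]

open Classical in
def setZeroFun (s : σ) (φ : MvPowerSeries σ K) : MvPowerSeries σ K :=
  fun m => if m s = 0 then coeff m φ else 0

theorem coeff_setZeroFun (s : σ) (φ : MvPowerSeries σ K) (m : σ →₀ ℕ) :
    coeff m (setZeroFun s φ) = if m s = 0 then coeff m φ else 0 := rfl

/-- The ring hom `k[[Xᵢ]] → k[[Xᵢ]]` sending `X s` to `0`. -/
def setZero (s : σ) : MvPowerSeries σ K →+* MvPowerSeries σ K where
  toFun := setZeroFun s
  map_one' := by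
    apply MvPowerSeries.ext; intro m
    rw [coeff_setZeroFun]
    by_cases h : m s = 0
    · simp [h]
    · have hm : m ≠ 0 := fun hm => h (by simp [hm])
      classical
      simp [h, coeff_one, hm]
  map_mul' φ ψ := by
    apply MvPowerSeries.ext; intro m
    classical
    rw [coeff_setZeroFun, coeff_mul, coeff_mul]
    simp only [coeff_setZeroFun]
    by_cases h : m s = 0
    · rw [if_pos h]
      apply Finset.sum_congr rfl
      rintro ⟨i, j⟩ hij
      rw [Finset.HasAntidiagonal.mem_antidiagonal] at hij
      have hij' : i s + j s = 0 := by
        rw [← Finsupp.add_apply, hij, h]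
      rw [if_pos (Nat.eq_zero_of_add_eq_zero_right hij'),
        if_pos (Nat.eq_zero_of_add_eq_zero_left hij')]
    · rw [if_neg h]
      symm
      apply Finset.sum_eq_zero
      rintro ⟨i, j⟩ hij
      rw [Finset.HasAntidiagonal.mem_antidiagonal] at hij
      have hij' : i s + j s = m s := by rw [← Finsupp.add_apply, hij]
      rcases Nat.eq_zero_or_pos (i s) with hi | hi
      · have hj : ¬ j s = 0 := by omega
        simp [hj]
      · have hi' : ¬ i s = 0 := by omega
        simp [hi']
  map_zero' := by
    apply MvPowerSeries.ext; intro m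
    rw [coeff_setZeroFun]
    simp
  map_add' φ ψ := by
    apply MvPowerSeries.ext; intro m
    rw [map_add, coeff_setZeroFun, coeff_setZeroFun, coeff_setZeroFun]
    by_cases h : m s = 0 <;> simp [h]

theorem setZero_eq_zero_iff (s : σ) (φ : MvPowerSeries σ K) :
    setZero s φ = 0 ↔ (X s : MvPowerSeries σ K) ∣ φ := by
  rw [X_dvd_iff]
  constructor
  · intro h m hm
    have := congrArg (coeff m) h
    rw [map_zero] at this
    rw [← this]
    show _ = coeff m (setZeroFun s φ)
    rw [coeff_setZeroFun, if_pos hm]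
  · intro h
    apply MvPowerSeries.ext; intro m
    rw [map_zero]
    show coeff m (setZeroFun s φ) = 0
    rw [coeff_setZeroFun]
    by_cases hm : m s = 0
    · rw [if_pos hm]; exact h m hm
    · rw [if_neg hm]

theorem X_prime [IsDomain K] (s : σ) : Prime (X s : MvPowerSeries σ K) := by
  classical
  constructor
  · intro h
    have := congrArg (coeff (Finsupp.single s 1)) h
    simp [coeff_X] at this
  constructor
  · intro h
    have := isUnit_constantCoeff _ h
    rw [constantCoeff_X] at this
    exact not_isUnit_zero this
  · intro a b hab
    rw [← setZero_eq_zero_iff s] at hab ⊢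
    rw [← setZero_eq_zero_iff s (φ := b)]
    rw [map_mul] at hab
    exact mul_eq_zero.mp hab

theorem X_not_dvd_X [Nontrivial K] {s t : σ} (h : s ≠ t) :
    ¬ (X s : MvPowerSeries σ K) ∣ (X t : MvPowerSeries σ K) := by
  classical
  rw [X_dvd_iff]
  push_neg
  refine ⟨Finsupp.single t 1, ?_, ?_⟩
  · rw [Finsupp.single_apply, if_neg (fun hh => h hh.symm)]
  · simp [coeff_X]

end MyAux

set_option linter.unusedSectionVars false
section MainAux

variable (k : Type*) [Field k] [CharZero k] [IsAlgClosed k]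

theorem mem_Md_iff' (q : Qd k) :
    q ∈ Md k ↔ ∃ w ∈ Ideal.span {xd k, zd k}, ιd k w = q := by
  show q ∈ (Submodule.map (Algebra.linearMap (Rd k) (Qd k))
    (Ideal.span {xd k, zd k}) : Submodule (Rd k) (Qd k)) ↔ _
  rw [Submodule.mem_map]
  rfl

theorem mul_mem_Md (α β : Qd k) (hα : α ∈ Hd k) (hβ : β ∈ Md k) :
    β * α ∈ Md k := by
  have hxspan : xd k ∈ Ideal.span {xd k, zd k} := Ideal.subset_span (Set.mem_insert _ _)
  have hzspan : zd k ∈ Ideal.span {xd k, zd k} :=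
    Ideal.subset_span (Set.mem_insert_of_mem _ rfl)
  obtain ⟨w, hw, hwq⟩ := (mem_Md_iff' k β).mp hβ
  have hxM : ιd k (xd k) ∈ Md k := (mem_Md_iff' k _).mpr ⟨xd k, hxspan, rfl⟩
  have hzM : ιd k (zd k) ∈ Md k := (mem_Md_iff' k _).mpr ⟨zd k, hzspan, rfl⟩
  obtain ⟨a, ha⟩ := hα _ hxM
  obtain ⟨b, hb⟩ := hα _ hzM
  have hinj : Function.Injective (ιd k) := IsFractionRing.injective (Rd k) (Qd k)
  have hab : xd k * b = zd k * a := by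
    apply hinj
    rw [map_mul, map_mul, ha, hb]
    ring
  obtain ⟨A, hA⟩ := Ideal.Quotient.mk_surjective (I := Ideal.span {fd k}) a
  obtain ⟨B, hB⟩ := Ideal.Quotient.mk_surjective (I := Ideal.span {fd k}) b
  have h1 : Ideal.Quotient.mk (Ideal.span {fd k}) ((X 0 : Sd k) * B)
      = Ideal.Quotient.mk (Ideal.span {fd k}) ((X 2 : Sd k) * A) := by
    rw [map_mul, map_mul, hA, hB]
    exact hab
  have h2 := Ideal.Quotient.eq.mp h1
  obtain ⟨g, hg⟩ := Ideal.mem_span_singleton'.mp h2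
  unfold fd at hg
  have hid : (X 2 : Sd k) * (A + g * X 2) = (X 0 : Sd k) * (B - g * (X 0 * X 1)) := by
    linear_combination hg
  have hdvdA : (X 0 : Sd k) ∣ A + g * X 2 :=
    ((MyAux.X_prime 0).2.2 _ _ ⟨_, hid⟩).resolve_left (MyAux.X_not_dvd_X (by decide))
  have hdvdB : (X 2 : Sd k) ∣ B - g * (X 0 * X 1) :=
    ((MyAux.X_prime 2).2.2 _ _ ⟨_, hid.symm⟩).resolve_left (MyAux.X_not_dvd_X (by decide))
  obtain ⟨h₁, hh₁⟩ := hdvdA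
  obtain ⟨h₂, hh₂⟩ := hdvdB
  have haeq : a = xd k * mkd k h₁ - mkd k g * zd k := by
    rw [← hA, show A = X 0 * h₁ - g * X 2 from by linear_combination hh₁, map_sub,
      map_mul, map_mul]
    rfl
  have hbeq : b = zd k * mkd k h₂ + mkd k g * (xd k * yd k) := by
    rw [← hB, show B = X 2 * h₂ + g * (X 0 * X 1) from by linear_combination hh₂, map_add,
      map_mul, map_mul, map_mul]
    rfl
  have haM : a ∈ Ideal.span {xd k, zd k} := by
    rw [haeq]
    exact sub_mem (Ideal.mul_mem_right _ _ hxspan) (Ideal.mul_mem_left _ _ hzspan)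
  have hbM : b ∈ Ideal.span {xd k, zd k} := by
    rw [hbeq]
    exact add_mem (Ideal.mul_mem_right _ _ hzspan)
      (Ideal.mul_mem_left _ _ (Ideal.mul_mem_right _ _ hxspan))
  obtain ⟨u, v, huv⟩ := Ideal.mem_span_pair.mp hw
  have hfin : ιd k (u * a + v * b) = β * α := by
    rw [← hwq, ← huv, map_add, map_mul, map_mul, map_add, map_mul, map_mul, ha, hb]
    ring
  exact (mem_Md_iff' k _).mpr ⟨u * a + v * b,
    add_mem (Ideal.mul_mem_left _ _ haM) (Ideal.mul_mem_left _ _ hbM), hfin⟩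

end MainAux
/-- For `R = k[[x,y,z]]/(x²y + z²)` and `M = (x,z)R`, the submodule
`P_R(M,M)` of endomorphisms factoring through a free `R`-module equals `M`
itself, under the identification `End_R(M) ⊆ Q(R)`. -/
theorem stmt13 : Pd k = Md k := by
  apply Set.Subset.antisymm
  · rintro q ⟨r, α, β, hα, hβ, rfl⟩
    exact Submodule.sum_mem _ (fun i _ => mul_mem_Md k (α i) (β i) (hα i) (hβ i))
  · intro q hq
    refine ⟨1, fun _ => 1, fun _ => q, ?_, fun _ => hq, by simp⟩
    intro i m hm
    obtain ⟨w, hw, hwm⟩ := (mem_Md_iff' k m).mp hm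
    exact ⟨w, by rw [one_mul, hwm]⟩


end
end
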